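/- The 4×5 zero-one weighing scheme with rows (0,0,0,1,1), (0,1,1,0,1), (1,1,0,1,0), (0,0,1,1,0) is valid for 5 mints with 4 weighings, and its cost is 5. Hence C(4,5) = 5 (the lower bound 5 holding since every valid scheme has cost at least the number of mints). -/

import Mathlib

/-- Excess-weight vector of state `d` under scheme `C`. -/
def vvec {W M : ℕ} (C : Fin W → Fin M → ℕ) (d : Fin M → Bool) : Fin W → ℕ :=
  fun w => ∑ m, C w m * (if d m then 1 else 0)

/-- A scheme is valid when excess vectors of distinct states are never
positive rational multiples of each other. -/
def ValidScheme {W M : ℕ} (C : Fin W → Fin M → ℕ) : Prop :=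
  ∀ d d' : Fin M → Bool, d ≠ d' →
    ¬ ∃ q : ℚ, 0 < q ∧
      (fun w => (vvec C d' w : ℚ)) = q • (fun w => (vvec C d w : ℚ))

/-- Total number of coins needed: each mint supplies its column maximum. -/
def cost {W M : ℕ} (C : Fin W → Fin M → ℕ) : ℕ :=
  ∑ m, Finset.univ.sup fun w => C w m

lemma key {W M : ℕ} (C : Fin W → Fin M → ℕ) (d d' : Fin M → Bool) :
    (∃ q : ℚ, 0 < q ∧
      (fun w => (vvec C d' w : ℚ)) = q • (fun w => (vvec C d w : ℚ))) ↔
    ((∀ w w', vvec C d' w * vvec C d w' = vvec C d' w' * vvec C d w) ∧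
      ((∀ w, vvec C d w = 0) ↔ (∀ w, vvec C d' w = 0))) := by
  constructor
  · rintro ⟨q, hq, h⟩
    have h' : ∀ w, (vvec C d' w : ℚ) = q * (vvec C d w : ℚ) := by
      intro w; exact congrFun h w
    constructor
    · intro w w'
      have : (vvec C d' w : ℚ) * vvec C d w' = (vvec C d' w' : ℚ) * vvec C d w := by
        rw [h' w, h' w']; ring
      exact_mod_cast this
    · constructor
      · intro hz w
        have := h' w
        rw [hz w] at this
        simpa using this
      · intro hz w
        have := h' w
        rw [hz w] at this
        have : q * (vvec C d w : ℚ) = 0 := by simpa using this.symm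
        rcases mul_eq_zero.mp this with h1 | h1
        · exact absurd h1 (ne_of_gt hq)
        · exact_mod_cast h1
  · rintro ⟨hcross, hiff⟩
    by_cases hz : ∀ w, vvec C d w = 0
    · refine ⟨1, one_pos, funext fun w => ?_⟩
      simp [hz w, hiff.mp hz w]
    · push_neg at hz
      obtain ⟨w0, hw0⟩ := hz
      have hd'w0 : vvec C d' w0 ≠ 0 := by
        intro h0
        -- then d' is all zero? no: use hiff: if v' were all zero... need v' w0 ≠ 0
        -- v' nonzero somewhere since v nonzero: contrapositive of hiff.mpr
        have hne : ¬ ∀ w, vvec C d' w = 0 := fun h => hw0 (hiff.mpr h w0)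
        push_neg at hne
        obtain ⟨w1, hw1⟩ := hne
        have := hcross w1 w0
        rw [h0] at this
        simp at this
        rcases this with h2 | h2
        · exact hw1 h2
        · exact hw0 h2
      refine ⟨(vvec C d' w0 : ℚ) / (vvec C d w0 : ℚ), ?_, funext fun w => ?_⟩
      · apply div_pos <;> exact_mod_cast Nat.pos_of_ne_zero ‹_›
      · have hc : (vvec C d' w : ℚ) * vvec C d w0 = (vvec C d' w0 : ℚ) * vvec C d w := by
          exact_mod_cast hcross w w0
        have hw0' : (vvec C d w0 : ℚ) ≠ 0 := by exact_mod_cast hw0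
        simp only [Pi.smul_apply, smul_eq_mul]
        field_simp
        linarith [hc]

theorem stmt_10 :
    ValidScheme ![![0, 0, 0, 1, 1], ![0, 1, 1, 0, 1], ![1, 1, 0, 1, 0], ![0, 0, 1, 1, 0]] ∧
    cost ![![0, 0, 0, 1, 1], ![0, 1, 1, 0, 1], ![1, 1, 0, 1, 0], ![0, 0, 1, 1, 0]] = 5 ∧
    (∀ C : Fin 4 → Fin 5 → ℕ, ValidScheme C → 5 ≤ cost C) := by
  refine ⟨?_, ?_, ?_⟩
  · intro d d' hne
    rw [key]
    revert hne
    revert d d'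
    decide
  · decide
  · intro C hC
    have hcol : ∀ m : Fin 5, 1 ≤ Finset.univ.sup fun w => C w m := by
      intro m
      by_contra h
      push_neg at h
      have hsup : (Finset.univ.sup fun w => C w m) = 0 := Nat.lt_one_iff.mp h
      have hzero : ∀ w, C w m = 0 := by
        intro w
        have h3 := Finset.le_sup (f := fun w => C w m) (Finset.mem_univ w)
        exact Nat.le_zero.mp (hsup ▸ h3)
      apply hC (fun k => decide (k = m)) (fun _ => false)
      · intro h
        have := congrFun h m
        simp at this
      · refine ⟨1, one_pos, funext fun w => ?_⟩
        have h1 : vvec C (fun k => decide (k = m)) w = 0 := by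
          simp only [vvec]
          rw [Finset.sum_eq_zero]
          intro k _
          by_cases hk : k = m
          · subst hk; simp [hzero w]
          · simp [hk]
        have h2 : vvec C (fun _ => false) w = 0 := by simp [vvec]
        simp [h1, h2]
    calc (5 : ℕ) = ∑ _m : Fin 5, 1 := by simp
    _ ≤ cost C := Finset.sum_le_sum fun m _ => hcol m
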